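/- Let n ≥ 3, 1 ≤ p ≤ n, and let L ⊆ {1, …, n} with t := |L| ≥ n−p+2. Let c : ℝ^{n+t} → ℝ^{2n−p+1} be the polynomial map whose coordinates, in the variables x_1, …, x_n and (y_ℓ)_{ℓ∈L} with z_ℓ = x_ℓ + y_ℓ for ℓ ∈ L and z_ℓ = x_ℓ otherwise, are: e_m(z_1, …, z_n) for m = 1, …, n−1; e_n(z_1, …, z_n) − x_1 x_2 ⋯ x_n; κ := x_1 x_2 ⋯ x_{p−1}; and e_j(z_{p+1}, …, z_n) · κ for j = 1, …, n−p, where e_m denotes the m-th elementary symmetric polynomial. Then for every nonempty open subset U of ℝ^{n+t}, the restriction of c to U is not injective. -/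

import Mathlib

open Finset MvPolynomial

/-- The `m`-th elementary symmetric polynomial of the values `v i` for `i ∈ s`. -/
noncomputable def esymOn {σ R : Type*} [CommSemiring R] (s : Finset σ) (m : ℕ) (v : σ → R) : R :=
  ∑ t ∈ Finset.powersetCard m s, ∏ i ∈ t, v i

lemma exists_eval_ne_zero {σ : Type*} [Fintype σ] (f : MvPolynomial σ ℝ)
    (vst : σ → ℝ) (hf : MvPolynomial.eval vst f ≠ 0)
    (U : Set (σ → ℝ)) (hU : IsOpen U) (hne : U.Nonempty) :
    ∃ v ∈ U, MvPolynomial.eval v f ≠ 0 := by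
  by_contra h
  push_neg at h
  obtain ⟨v₀, hv₀⟩ := hne
  set w : σ → ℝ := fun i => vst i - v₀ i with hw
  set q : Polynomial ℝ :=
    MvPolynomial.aeval (fun i => Polynomial.C (v₀ i) + Polynomial.C (w i) * Polynomial.X) f with hq
  have hqe : ∀ t : ℝ, q.eval t = MvPolynomial.eval (fun i => v₀ i + t * w i) f := by
    intro t
    rw [hq, MvPolynomial.aeval_def, MvPolynomial.polynomial_eval_eval₂]
    have h1 : ((Polynomial.evalRingHom t).comp (algebraMap ℝ (Polynomial ℝ))) = RingHom.id ℝ := by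
      ext r; simp
    rw [h1]
    simp only [Polynomial.eval_add, Polynomial.eval_C, Polynomial.eval_mul, Polynomial.eval_X]
    rw [MvPolynomial.eval, coe_eval₂Hom]
    apply MvPolynomial.eval₂_congr
    intro i c _ _
    simp [hw]; ring
  have hcont : Continuous (fun t : ℝ => fun i => v₀ i + t * w i) := by
    apply continuous_pi; intro i; fun_prop
  have hnb : {t : ℝ | (fun i => v₀ i + t * w i) ∈ U} ∈ nhds (0 : ℝ) := by
    have : (fun i => v₀ i + (0:ℝ) * w i) ∈ U := by simpa using hv₀
    exact hcont.continuousAt.preimage_mem_nhds (hU.mem_nhds this)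
  obtain ⟨ε, hε, hball⟩ := Metric.mem_nhds_iff.1 hnb
  have hsub : Set.Ioo (-(ε/2)) (ε/2) ⊆ {t : ℝ | q.IsRoot t} := by
    intro t ht
    have hd : dist t 0 < ε := by
      simp only [Real.dist_eq, sub_zero]
      rcases ht with ⟨h1, h2⟩
      rw [abs_lt]; constructor <;> linarith
    have := hball hd
    simp only [Set.mem_setOf_eq, Polynomial.IsRoot, hqe]
    exact h _ this
  have hq0 : q = 0 :=
    Polynomial.eq_zero_of_infinite_isRoot _ ((Set.Ioo_infinite (by linarith : -(ε/2) < ε/2)).mono hsub)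
  have h1 := hqe 1
  rw [hq0] at h1
  simp only [Polynomial.eval_zero] at h1
  apply hf
  rw [show vst = fun i => v₀ i + 1 * w i from by funext i; simp [hw]]
  exact h1.symm


/-- real power sum -/
noncomputable def pS {n : ℕ} (k : ℕ) (u : Fin n → ℝ) : ℝ := ∑ i, u i ^ k

lemma esymOn_zero {σ : Type*} (s : Finset σ) (v : σ → ℝ) : esymOn s 0 v = 1 := by
  simp [esymOn]

lemma eval_esymm {n : ℕ} (k : ℕ) (u : Fin n → ℝ) :
    MvPolynomial.eval u (MvPolynomial.esymm (Fin n) ℝ k) = esymOn Finset.univ k u := by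
  simp [MvPolynomial.esymm, esymOn]

lemma eval_psum {n : ℕ} (k : ℕ) (u : Fin n → ℝ) :
    MvPolynomial.eval u (MvPolynomial.psum (Fin n) ℝ k) = pS k u := by
  simp [MvPolynomial.psum, pS]

/-- Newton's identity, real version. -/
lemma newtonR {n : ℕ} (k : ℕ) (u : Fin n → ℝ) :
    (k : ℝ) * esymOn Finset.univ k u = (-1) ^ (k + 1) *
      ∑ a ∈ Finset.HasAntidiagonal.antidiagonal k with a.1 < k,
        (-1) ^ a.1 * esymOn Finset.univ a.1 u * pS a.2 u := by
  have h := congrArg (MvPolynomial.eval u) (MvPolynomial.mul_esymm_eq_sum (Fin n) ℝ k)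
  simpa [eval_esymm, eval_psum, map_sum] using h

lemma esym_eq_of_pS_eq {n : ℕ} (u v : Fin n → ℝ) (K : ℕ)
    (hp : ∀ j, 1 ≤ j → j ≤ K → pS j u = pS j v) :
    ∀ m, m ≤ K → esymOn Finset.univ m u = esymOn Finset.univ m v := by
  intro m
  induction m using Nat.strong_induction_on with
  | _ m ih =>
    intro hm
    rcases Nat.eq_zero_or_pos m with h0 | h1
    · subst h0; simp [esymOn_zero]
    · have hu := newtonR m u
      have hv := newtonR m v
      have hsum : ∑ a ∈ Finset.HasAntidiagonal.antidiagonal m with a.1 < m,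
          (-1:ℝ) ^ a.1 * esymOn Finset.univ a.1 u * pS a.2 u
          = ∑ a ∈ Finset.HasAntidiagonal.antidiagonal m with a.1 < m,
          (-1:ℝ) ^ a.1 * esymOn Finset.univ a.1 v * pS a.2 v := by
        apply Finset.sum_congr rfl
        intro a ha
        simp only [Finset.mem_filter, Finset.HasAntidiagonal.mem_antidiagonal] at ha
        obtain ⟨hae, hal⟩ := ha
        rw [ih a.1 hal (by omega), hp a.2 (by omega) (by omega)]
      have : (m : ℝ) * esymOn Finset.univ m u = (m : ℝ) * esymOn Finset.univ m v := by
        rw [hu, hv, hsum]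
      have hm0 : (m : ℝ) ≠ 0 := Nat.cast_ne_zero.2 (by omega)
      exact mul_left_cancel₀ hm0 this

lemma esym_top_diff {n : ℕ} (hn : 1 ≤ n) (u v : Fin n → ℝ)
    (hp : ∀ j, 1 ≤ j → j ≤ n - 1 → pS j u = pS j v) :
    (n : ℝ) * (esymOn Finset.univ n u - esymOn Finset.univ n v)
      = (-1) ^ (n + 1) * (pS n u - pS n v) := by
  have hu := newtonR n u
  have hv := newtonR n v
  have he : ∀ m, m ≤ n - 1 → esymOn Finset.univ m u = esymOn Finset.univ m v :=
    esym_eq_of_pS_eq u v (n-1) hp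
  have hsum : ∑ a ∈ Finset.HasAntidiagonal.antidiagonal n with a.1 < n,
        (-1:ℝ) ^ a.1 * esymOn Finset.univ a.1 u * pS a.2 u
      - ∑ a ∈ Finset.HasAntidiagonal.antidiagonal n with a.1 < n,
        (-1:ℝ) ^ a.1 * esymOn Finset.univ a.1 v * pS a.2 v
      = pS n u - pS n v := by
    rw [← Finset.sum_sub_distrib]
    rw [Finset.sum_eq_single_of_mem ((0 : ℕ), n)]
    · simp [esymOn_zero]
    · simp [Finset.mem_filter, Finset.HasAntidiagonal.mem_antidiagonal]; omega
    · intro a ha hne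
      simp only [Finset.mem_filter, Finset.HasAntidiagonal.mem_antidiagonal] at ha
      obtain ⟨hae, hal⟩ := ha
      have ha1 : 1 ≤ a.1 := by
        by_contra hc
        push_neg at hc
        apply hne
        have h0 : a.1 = 0 := by omega
        have h2 : a.2 = n := by omega
        exact Prod.ext h0 h2
      rw [he a.1 (by omega), hp a.2 (by omega) (by omega)]
      ring
  rw [mul_sub, hu, hv, ← mul_sub, hsum]


noncomputable def Phi (n : ℕ) : (Fin n → ℝ) → (Fin n → ℝ) := fun u k => pS (k.1 + 1) u

noncomputable def PhiD {n : ℕ} (u : Fin n → ℝ) : (Fin n → ℝ) →L[ℝ] (Fin n → ℝ) :=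
  ContinuousLinearMap.pi (fun k =>
    ∑ i, (((k.1 : ℝ) + 1) * u i ^ k.1) • ContinuousLinearMap.proj i)

lemma hasStrict_Phi {n : ℕ} (u : Fin n → ℝ) : HasStrictFDerivAt (Phi n) (PhiD u) u := by
  rw [show PhiD u = ContinuousLinearMap.pi (fun k : Fin n =>
    ∑ i, (((k.1 : ℝ) + 1) * u i ^ k.1) • ContinuousLinearMap.proj i) from rfl]
  apply hasStrictFDerivAt_pi.2
  intro k
  have : (fun v : Fin n → ℝ => pS (k.1+1) v) = fun v => ∑ i, (v i) ^ (k.1+1) := by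
    funext v; rfl
  unfold Phi
  rw [this]
  apply HasStrictFDerivAt.fun_sum
  intro i _
  have hpow : HasStrictDerivAt (fun x : ℝ => x ^ (k.1+1))
      ((k.1+1 : ℕ) * (u i) ^ k.1) (u i) := by
    simpa using hasStrictDerivAt_pow (k.1+1) (u i)
  have hproj : HasStrictFDerivAt (fun v : Fin n → ℝ => v i)
      ((ContinuousLinearMap.proj i : (Fin n → ℝ) →L[ℝ] ℝ)) u :=
    hasStrictFDerivAt_apply (𝕜 := ℝ) i u
  have := hpow.comp_hasStrictFDerivAt u hproj
  simpa [push_cast, Function.comp_def] using this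

lemma PhiD_injective {n : ℕ} (u : Fin n → ℝ) (hdist : Function.Injective u) :
    Function.Injective (PhiD u) := by
  rw [← (PhiD u).coe_coe, ← LinearMap.ker_eq_bot, LinearMap.ker_eq_bot']
  intro w hw
  -- moments vanish
  have hmom : ∀ k : ℕ, k < n → ∑ i, w i * u i ^ k = 0 := by
    intro k hk
    have hcomp : PhiD u w ⟨k, hk⟩ = ∑ i, (((k : ℝ) + 1) * u i ^ k) * w i := by
      simp [PhiD, ContinuousLinearMap.proj]
    have h0 : PhiD u w ⟨k, hk⟩ = 0 := by
      have : (PhiD u) w = 0 := hw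
      rw [this]; rfl
    rw [hcomp] at h0
    have : ((k:ℝ)+1) * ∑ i, w i * u i ^ k = 0 := by
      rw [Finset.mul_sum]
      rw [← h0]
      apply Finset.sum_congr rfl
      intro i _; ring
    have hk0 : ((k:ℝ)+1) ≠ 0 := by positivity
    exact (mul_eq_zero.1 this).resolve_left hk0
  funext i₀
  -- Lagrange polynomial
  set q : Polynomial ℝ := ∏ j ∈ Finset.univ.erase i₀, (Polynomial.X - Polynomial.C (u j)) with hqdef
  have hqdeg : q.natDegree < n := by
    have : q.natDegree = (Finset.univ.erase i₀).card := by
      rw [hqdef]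
      rw [Polynomial.natDegree_prod]
      · simp [Polynomial.natDegree_X_sub_C]
      · intro j _; exact Polynomial.X_sub_C_ne_zero (u j)
    rw [this, Finset.card_erase_of_mem (Finset.mem_univ i₀), Finset.card_univ]
    simp only [Fintype.card_fin]
    have : 0 < n := i₀.pos
    omega
  have hsum0 : ∑ i, w i * q.eval (u i) = 0 := by
    have hev : ∀ x : ℝ, q.eval x = ∑ k ∈ Finset.range n, q.coeff k * x ^ k := by
      intro x
      rw [Polynomial.eval_eq_sum_range' hqdeg]
    calc ∑ i, w i * q.eval (u i) = ∑ i, ∑ k ∈ Finset.range n, q.coeff k * (w i * u i ^ k) := by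
          apply Finset.sum_congr rfl
          intro i _
          rw [hev (u i), Finset.mul_sum]
          apply Finset.sum_congr rfl
          intro k _; ring
      _ = ∑ k ∈ Finset.range n, q.coeff k * ∑ i, w i * u i ^ k := by
          rw [Finset.sum_comm]
          apply Finset.sum_congr rfl
          intro k _
          rw [Finset.mul_sum]
      _ = 0 := by
          apply Finset.sum_eq_zero
          intro k hk
          rw [hmom k (Finset.mem_range.1 hk), mul_zero]
  have hqzero : ∀ i, i ≠ i₀ → q.eval (u i) = 0 := by
    intro i hi
    rw [hqdef]
    rw [Polynomial.eval_prod]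
    apply Finset.prod_eq_zero (Finset.mem_erase.2 ⟨hi, Finset.mem_univ i⟩)
    simp
  have hqne : q.eval (u i₀) ≠ 0 := by
    rw [hqdef, Polynomial.eval_prod]
    apply Finset.prod_ne_zero_iff.2
    intro j hj
    simp only [Polynomial.eval_sub, Polynomial.eval_X, Polynomial.eval_C]
    have : u i₀ ≠ u j := fun h => (Finset.mem_erase.1 hj).1 (hdist h).symm
    exact sub_ne_zero.2 this
  have : w i₀ * q.eval (u i₀) = 0 := by
    rw [← hsum0]
    rw [Finset.sum_eq_single_of_mem i₀ (Finset.mem_univ i₀)]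
    intro i _ hi
    rw [hqzero i hi, mul_zero]
  have := (mul_eq_zero.1 this).resolve_right hqne
  simpa using this

/-- The core curve: through a point with distinct coordinates, there is a curve on which
all power sums `p₁, …, p_{n-1}` are constant while `pₙ` moves by exactly `s`. -/
lemma exists_pS_curve {n : ℕ} (hn : 1 ≤ n) (z0 : Fin n → ℝ) (hdist : Function.Injective z0) :
    ∃ zc : ℝ → (Fin n → ℝ), ContinuousAt zc 0 ∧ zc 0 = z0 ∧
      ∀ᶠ s in nhds (0:ℝ),
        (∀ j, 1 ≤ j → j + 1 ≤ n → pS j (zc s) = pS j z0) ∧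
        pS n (zc s) = pS n z0 + s := by
  classical
  have hinj : Function.Injective ((PhiD z0).toLinearMap) := PhiD_injective z0 hdist
  have hsurj : Function.Surjective ((PhiD z0).toLinearMap) :=
    LinearMap.injective_iff_surjective.1 hinj
  set E : (Fin n → ℝ) ≃ₗ[ℝ] (Fin n → ℝ) :=
    LinearEquiv.ofBijective ((PhiD z0).toLinearMap) ⟨hinj, hsurj⟩ with hE
  set CLE : (Fin n → ℝ) ≃L[ℝ] (Fin n → ℝ) := E.toContinuousLinearEquiv with hCLE
  have hco : ((CLE : (Fin n → ℝ) →L[ℝ] (Fin n → ℝ))) = PhiD z0 := by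
    apply ContinuousLinearMap.ext
    intro v
    rfl
  have hstrict : HasStrictFDerivAt (Phi n) ((CLE : (Fin n → ℝ) →L[ℝ] (Fin n → ℝ))) z0 := by
    rw [hco]; exact hasStrict_Phi z0
  set blast : Fin n := ⟨n - 1, by omega⟩ with hblast
  set zc : ℝ → (Fin n → ℝ) :=
    fun s => hstrict.localInverse (Phi n) _ z0 (Phi n z0 + s • (Pi.single blast 1 : Fin n → ℝ)) with hzc
  have harg : Continuous (fun s : ℝ => Phi n z0 + s • (Pi.single blast 1 : Fin n → ℝ)) := by fun_prop
  have harg0 : (Phi n z0 + (0:ℝ) • (Pi.single blast 1 : Fin n → ℝ)) = Phi n z0 := by simp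
  refine ⟨zc, ?_, ?_, ?_⟩
  · have h1 := hstrict.localInverse_continuousAt
    have h2 : ContinuousAt (HasStrictFDerivAt.localInverse (Phi n) CLE z0 hstrict)
        (Phi n z0 + (0:ℝ) • (Pi.single blast 1 : Fin n → ℝ)) := by
      simpa using h1
    exact ContinuousAt.comp (x := (0:ℝ))
      (f := fun s : ℝ => Phi n z0 + s • (Pi.single blast 1 : Fin n → ℝ))
      (g := HasStrictFDerivAt.localInverse (Phi n) CLE z0 hstrict) h2 harg.continuousAt
  · show HasStrictFDerivAt.localInverse (Phi n) CLE z0 hstrict _ = z0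
    rw [harg0]
    exact hstrict.localInverse_apply_image
  · have hri := hstrict.eventually_right_inverse
    have htend : Filter.Tendsto (fun s : ℝ => Phi n z0 + s • (Pi.single blast 1 : Fin n → ℝ))
        (nhds 0) (nhds (Phi n z0)) := by
      have := harg.continuousAt (x := (0:ℝ))
      rwa [ContinuousAt, harg0] at this
    filter_upwards [htend.eventually hri] with s hs
    have hsk : ∀ k : Fin n, pS (k.1+1) (zc s)
        = pS (k.1+1) z0 + s * (Pi.single blast 1 : Fin n → ℝ) k := by
      intro k
      have h3 := congrFun hs k
      simpa [Phi, Pi.add_apply, Pi.smul_apply, smul_eq_mul] using h3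
    constructor
    · intro j hj1 hj2
      have h4 := hsk ⟨j-1, by omega⟩
      have hne : (⟨j-1, by omega⟩ : Fin n) ≠ blast := by
        intro hc
        have := congrArg Fin.val hc
        simp [hblast] at this
        omega
      rw [Pi.single_eq_of_ne hne] at h4
      have hj : j - 1 + 1 = j := Nat.sub_add_cancel hj1
      rw [hj] at h4
      simpa using h4
    · have h5 := hsk blast
      rw [Pi.single_eq_same] at h5
      have hb1 : blast.1 + 1 = n := by simp [hblast]; omega
      rw [hb1] at h5
      simpa using h5


/-- In `ℝ[x₁, …, xₙ, (y_ℓ)_{ℓ ∈ L}]`: `z_ℓ = x_ℓ + y_ℓ` if `ℓ ∈ L` and `z_ℓ = x_ℓ`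
otherwise. -/
noncomputable def z11 (n : ℕ) (L : Finset (Fin n)) (ℓ : Fin n) :
    MvPolynomial (Fin n ⊕ {i : Fin n // i ∈ L}) ℝ :=
  X (Sum.inl ℓ) + if h : ℓ ∈ L then X (Sum.inr ⟨ℓ, h⟩) else 0

/-- The `2n - p + 1` coordinates of the coefficient map of the cycle model with input in
compartment `1`, output in compartment `p`, and leak set `L`:
`e₁(z), …, e_{n-1}(z)`, `eₙ(z) - x₁⋯xₙ`, `κ = x₁⋯x_{p-1}`, and
`eⱼ(z_{p+1}, …, zₙ)·κ` for `j = 1, …, n - p`. -/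
noncomputable def coeffs11 (n p : ℕ) (L : Finset (Fin n)) (m : Fin (2 * n - p + 1)) :
    MvPolynomial (Fin n ⊕ {i : Fin n // i ∈ L}) ℝ :=
  if m.1 < n - 1 then esymOn Finset.univ (m.1 + 1) (z11 n L)
  else if m.1 = n - 1 then
    esymOn Finset.univ n (z11 n L) - ∏ i : Fin n, X (Sum.inl i)
  else if m.1 = n then
    ∏ i ∈ Finset.univ.filter (fun i : Fin n => i.1 < p - 1), X (Sum.inl i)
  else
    esymOn (Finset.univ.filter (fun i : Fin n => p ≤ i.1)) (m.1 - n) (z11 n L) *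
      ∏ i ∈ Finset.univ.filter (fun i : Fin n => i.1 < p - 1), X (Sum.inl i)

/-! ### evaluation helpers -/

/-- Real version of `z11`. -/
noncomputable def Zv (n : ℕ) (L : Finset (Fin n)) (v : (Fin n ⊕ {i : Fin n // i ∈ L}) → ℝ)
    (ℓ : Fin n) : ℝ :=
  v (Sum.inl ℓ) + if h : ℓ ∈ L then v (Sum.inr ⟨ℓ, h⟩) else 0

lemma eval_z11 {n : ℕ} {L : Finset (Fin n)} (v : (Fin n ⊕ {i : Fin n // i ∈ L}) → ℝ)
    (ℓ : Fin n) : MvPolynomial.eval v (z11 n L ℓ) = Zv n L v ℓ := by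
  unfold z11 Zv
  rw [map_add]
  congr 1
  · simp
  · split_ifs with h <;> simp

lemma eval_esymOn {n : ℕ} {L : Finset (Fin n)} (v : (Fin n ⊕ {i : Fin n // i ∈ L}) → ℝ)
    (s : Finset (Fin n)) (m : ℕ) (g : Fin n → MvPolynomial (Fin n ⊕ {i : Fin n // i ∈ L}) ℝ) :
    MvPolynomial.eval v (esymOn s m g) = esymOn s m (fun i => MvPolynomial.eval v (g i)) := by
  unfold esymOn
  rw [map_sum]
  exact Finset.sum_congr rfl fun t _ => by rw [map_prod]

lemma esymOn_empty_congr {σ' : Type*} (j : ℕ) (f g : σ' → ℝ) :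
    esymOn (∅ : Finset σ') j f = esymOn ∅ j g := by
  unfold esymOn
  apply Finset.sum_congr rfl
  intro t ht
  have : t = ∅ := Finset.subset_empty.1 (Finset.mem_powersetCard.1 ht).1
  subst this
  simp

/-- The key reduction: all coordinates of the coefficient map are functions of
the symmetric functions of `z`, the product of all `x`'s, and the partial products. -/
lemma eval_coeffs_eq (n p : ℕ) (L : Finset (Fin n))
    (v w : (Fin n ⊕ {i : Fin n // i ∈ L}) → ℝ)
    (h1 : ∀ m, 1 ≤ m → m ≤ n - 1 →
      esymOn Finset.univ m (Zv n L v) = esymOn Finset.univ m (Zv n L w))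
    (h2 : esymOn Finset.univ n (Zv n L v) - ∏ i, v (Sum.inl i)
        = esymOn Finset.univ n (Zv n L w) - ∏ i, w (Sum.inl i))
    (h3 : ∏ i ∈ Finset.univ.filter (fun i : Fin n => i.1 < p - 1), v (Sum.inl i)
        = ∏ i ∈ Finset.univ.filter (fun i : Fin n => i.1 < p - 1), w (Sum.inl i))
    (h4 : ∀ j, esymOn (Finset.univ.filter (fun i : Fin n => p ≤ i.1)) j (Zv n L v)
        = esymOn (Finset.univ.filter (fun i : Fin n => p ≤ i.1)) j (Zv n L w)) :
    ∀ m, MvPolynomial.eval v (coeffs11 n p L m) = MvPolynomial.eval w (coeffs11 n p L m) := by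
  intro m
  have hZv : (fun i => MvPolynomial.eval v (z11 n L i)) = Zv n L v := funext (eval_z11 v)
  have hZw : (fun i => MvPolynomial.eval w (z11 n L i)) = Zv n L w := funext (eval_z11 w)
  unfold coeffs11
  split_ifs with hm1 hm2 hm3
  · rw [eval_esymOn, eval_esymOn, hZv, hZw]
    exact h1 (m.1+1) (by omega) (by omega)
  · rw [map_sub, map_sub, eval_esymOn, eval_esymOn, hZv, hZw, map_prod, map_prod]
    simpa using h2
  · rw [map_prod, map_prod]
    simpa using h3
  · rw [map_mul, map_mul, eval_esymOn, eval_esymOn, hZv, hZw, map_prod, map_prod]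
    congr 1
    · exact h4 _
    · simpa using h3

/-- Case 1: two leaks on the same side of the `κ`-cut. -/
lemma caseSame (n p : ℕ) (L : Finset (Fin n)) (ℓ₁ ℓ₂ : Fin n)
    (h₁ : ℓ₁ ∈ L) (h₂ : ℓ₂ ∈ L) (hne12 : ℓ₁ ≠ ℓ₂)
    (hiff : (ℓ₁.1 < p - 1 ↔ ℓ₂.1 < p - 1))
    (U : Set ((Fin n ⊕ {i : Fin n // i ∈ L}) → ℝ)) (hU : IsOpen U) (hne : U.Nonempty) :
    ¬ Set.InjOn
        (fun (v : (Fin n ⊕ {i : Fin n // i ∈ L}) → ℝ) (m : Fin (2 * n - p + 1)) =>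
          MvPolynomial.eval v (coeffs11 n p L m)) U := by
  intro hinj
  obtain ⟨v, hvU, hvne⟩ := exists_eval_ne_zero (X (Sum.inl ℓ₁)) (fun _ => 1) (by simp) U hU hne
  rw [MvPolynomial.eval_X] at hvne
  -- the scaling deformation
  set W : ℝ → (Fin n ⊕ {i : Fin n // i ∈ L}) → ℝ := fun lam c =>
    Sum.elim
      (fun i => if i = ℓ₁ then lam * v (Sum.inl ℓ₁)
        else if i = ℓ₂ then lam⁻¹ * v (Sum.inl ℓ₂) else v (Sum.inl i))
      (fun ℓ => if ℓ.1 = ℓ₁ then v (Sum.inr ℓ) + (1 - lam) * v (Sum.inl ℓ₁)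
        else if ℓ.1 = ℓ₂ then v (Sum.inr ℓ) + (1 - lam⁻¹) * v (Sum.inl ℓ₂)
        else v (Sum.inr ℓ)) c
    with hW
  have hWinl : ∀ lam i, W lam (Sum.inl i) = if i = ℓ₁ then lam * v (Sum.inl ℓ₁)
      else if i = ℓ₂ then lam⁻¹ * v (Sum.inl ℓ₂) else v (Sum.inl i) := fun _ _ => rfl
  have hWinr : ∀ lam (ℓ : {i : Fin n // i ∈ L}), W lam (Sum.inr ℓ)
      = if ℓ.1 = ℓ₁ then v (Sum.inr ℓ) + (1 - lam) * v (Sum.inl ℓ₁)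
        else if ℓ.1 = ℓ₂ then v (Sum.inr ℓ) + (1 - lam⁻¹) * v (Sum.inl ℓ₂)
        else v (Sum.inr ℓ) := fun _ _ => rfl
  have hW1 : W 1 = v := by
    funext c
    rcases c with i | ℓ
    · rw [hWinl]
      split_ifs with hi1 hi2
      · rw [hi1]; ring
      · rw [hi2]; simp
      · rfl
    · rw [hWinr]
      split_ifs <;> simp
  have hWc : ContinuousAt W 1 := by
    apply continuousAt_pi.2
    intro c
    rcases c with i | ℓ
    · simp only [hWinl]
      split_ifs with hi1 hi2
      · fun_prop
      · exact ContinuousAt.mul ((continuousAt_inv₀ one_ne_zero)) continuousAt_const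
      · fun_prop
    · simp only [hWinr]
      split_ifs with hi1 hi2
      · fun_prop
      · exact ContinuousAt.add continuousAt_const
          (ContinuousAt.mul (ContinuousAt.sub continuousAt_const
            (continuousAt_inv₀ one_ne_zero)) continuousAt_const)
      · fun_prop
  -- choose lam close to 1
  have hWU : {lam : ℝ | W lam ∈ U} ∈ nhds (1:ℝ) := by
    apply hWc.preimage_mem_nhds
    rw [hW1]
    exact hU.mem_nhds hvU
  obtain ⟨ε, hε, hball⟩ := Metric.mem_nhds_iff.1 hWU
  set lam : ℝ := 1 + min (ε/2) (1/2) with hlam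
  have hmin : (0:ℝ) < min (ε/2) (1/2) := by positivity
  have hlam1 : lam ≠ 1 := by
    simp only [hlam]; intro hc; nlinarith
  have hlam0 : lam ≠ 0 := by
    have : (0:ℝ) < lam := by simp only [hlam]; positivity
    linarith
  have hlamU : W lam ∈ U := by
    apply hball
    simp only [Metric.mem_ball, hlam, dist_eq_norm]
    have h1 : min (ε/2) (1/2) ≤ ε/2 := min_le_left _ _
    rw [show (1 + min (ε/2) (1/2) - 1) = min (ε/2) (1/2) by ring, Real.norm_eq_abs,
      abs_of_pos hmin]
    linarith
  -- Z values agree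
  have hZ : Zv n L (W lam) = Zv n L v := by
    funext ℓ
    unfold Zv
    by_cases hℓ1 : ℓ = ℓ₁
    · rw [hℓ1, dif_pos h₁, dif_pos h₁, hWinl, hWinr, if_pos rfl,
        if_pos (show (⟨ℓ₁, h₁⟩ : {i : Fin n // i ∈ L}).1 = ℓ₁ from rfl)]
      ring
    · by_cases hℓ2 : ℓ = ℓ₂
      · rw [hℓ2, dif_pos h₂, dif_pos h₂, hWinl, hWinr,
          if_neg (Ne.symm hne12),
          if_pos (show (⟨ℓ₂, h₂⟩ : {i : Fin n // i ∈ L}).1 = ℓ₂ from rfl)]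
        rw [if_neg (show (⟨ℓ₂, h₂⟩ : {i : Fin n // i ∈ L}).1 ≠ ℓ₁ from Ne.symm hne12),
          if_pos rfl]
        ring
      · rw [hWinl, if_neg hℓ1, if_neg hℓ2]
        by_cases hd : ℓ ∈ L
        · rw [dif_pos hd, dif_pos hd, hWinr,
            if_neg (show (⟨ℓ, hd⟩ : {i : Fin n // i ∈ L}).1 ≠ ℓ₁ from hℓ1),
            if_neg (show (⟨ℓ, hd⟩ : {i : Fin n // i ∈ L}).1 ≠ ℓ₂ from hℓ2)]
        · rw [dif_neg hd, dif_neg hd]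
  -- product over a set containing both ℓ₁ and ℓ₂ is unchanged
  have hprod2 : ∀ s : Finset (Fin n), ℓ₁ ∈ s → ℓ₂ ∈ s →
      ∏ i ∈ s, W lam (Sum.inl i) = ∏ i ∈ s, v (Sum.inl i) := by
    intro s hs1 hs2
    rw [← Finset.mul_prod_erase s _ hs1, ← Finset.mul_prod_erase (s.erase ℓ₁) _
      (Finset.mem_erase.2 ⟨Ne.symm hne12, hs2⟩),
      ← Finset.mul_prod_erase s (fun i => v (Sum.inl i)) hs1,
      ← Finset.mul_prod_erase (s.erase ℓ₁) (fun i => v (Sum.inl i))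
      (Finset.mem_erase.2 ⟨Ne.symm hne12, hs2⟩)]
    have hrest : ∏ i ∈ (s.erase ℓ₁).erase ℓ₂, W lam (Sum.inl i)
        = ∏ i ∈ (s.erase ℓ₁).erase ℓ₂, v (Sum.inl i) := by
      apply Finset.prod_congr rfl
      intro i hi
      have hi2 : i ≠ ℓ₂ := (Finset.mem_erase.1 hi).1
      have hi1 : i ≠ ℓ₁ := (Finset.mem_erase.1 (Finset.mem_erase.1 hi).2).1
      rw [hWinl, if_neg hi1, if_neg hi2]
    rw [hrest]
    have hl1 : W lam (Sum.inl ℓ₁) = lam * v (Sum.inl ℓ₁) := by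
      rw [hWinl, if_pos rfl]
    have hl2 : W lam (Sum.inl ℓ₂) = lam⁻¹ * v (Sum.inl ℓ₂) := by
      rw [hWinl, if_neg (Ne.symm hne12), if_pos rfl]
    rw [hl1, hl2]
    field_simp
  -- product over a set containing neither is unchanged
  have hprod0 : ∀ s : Finset (Fin n), ℓ₁ ∉ s → ℓ₂ ∉ s →
      ∏ i ∈ s, W lam (Sum.inl i) = ∏ i ∈ s, v (Sum.inl i) := by
    intro s hs1 hs2
    apply Finset.prod_congr rfl
    intro i hi
    rw [hWinl, if_neg (show i ≠ ℓ₁ from fun h => hs1 (h ▸ hi)),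
      if_neg (show i ≠ ℓ₂ from fun h => hs2 (h ▸ hi))]
  have heq : ∀ m, MvPolynomial.eval (W lam) (coeffs11 n p L m)
      = MvPolynomial.eval v (coeffs11 n p L m) := by
    apply eval_coeffs_eq
    · intro m _ _; rw [hZ]
    · rw [hZ, hprod2 Finset.univ (Finset.mem_univ _) (Finset.mem_univ _)]
    · by_cases hc : ℓ₁.1 < p - 1
      · exact hprod2 _ (Finset.mem_filter.2 ⟨Finset.mem_univ _, hc⟩)
          (Finset.mem_filter.2 ⟨Finset.mem_univ _, hiff.1 hc⟩)
      · apply hprod0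
        · intro h; exact hc (Finset.mem_filter.1 h).2
        · intro h; exact (fun hcc => hc (hiff.2 hcc)) (Finset.mem_filter.1 h).2
    · intro j; rw [hZ]
  have := hinj hlamU hvU (funext heq)
  have hc := congrFun this (Sum.inl ℓ₁)
  rw [hWinl, if_pos rfl] at hc
  have : (lam - 1) * v (Sum.inl ℓ₁) = 0 := by linarith [hc]
  rcases mul_eq_zero.1 this with h | h
  · exact hlam1 (by linarith)
  · exact hvne h


lemma caseHard (n : ℕ) (hn : 3 ≤ n) (L : Finset (Fin n)) (a b : Fin n)
    (ha : a ∈ L) (hb : b ∈ L) (haA : a.1 < n - 1) (hbA : b.1 = n - 1)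
    (hLab : ∀ i, i ∈ L ↔ (i = a ∨ i = b))
    (U : Set ((Fin n ⊕ {i : Fin n // i ∈ L}) → ℝ)) (hU : IsOpen U) (hne : U.Nonempty) :
    ¬ Set.InjOn
        (fun (v : (Fin n ⊕ {i : Fin n // i ∈ L}) → ℝ) (m : Fin (2 * n - n + 1)) =>
          MvPolynomial.eval v (coeffs11 n n L m)) U := by
  intro hinj
  classical
  have hab : a ≠ b := fun h => by rw [h] at haA; omega
  set A : Finset (Fin n) := Finset.univ.filter (fun i : Fin n => i.1 < n - 1) with hA
  have haMemA : a ∈ A := Finset.mem_filter.2 ⟨Finset.mem_univ _, haA⟩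
  have hbNotA : b ∉ A := by
    intro h; have := (Finset.mem_filter.1 h).2; omega
  -- generic point
  set G : MvPolynomial (Fin n ⊕ {i : Fin n // i ∈ L}) ℝ :=
    (∏ e ∈ Finset.univ.offDiag, (z11 n L e.1 - z11 n L e.2)) *
      ∏ i ∈ A, X (Sum.inl i) with hG
  have hGne : MvPolynomial.eval (Sum.elim (fun i : Fin n => (i.1 : ℝ) + 1) (fun _ => 0)) G ≠ 0 := by
    set vst : (Fin n ⊕ {i : Fin n // i ∈ L}) → ℝ :=
      Sum.elim (fun i : Fin n => (i.1 : ℝ) + 1) (fun _ => 0) with hvst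
    have hZst : ∀ ℓ, Zv n L vst ℓ = (ℓ.1 : ℝ) + 1 := by
      intro ℓ
      unfold Zv
      split_ifs with h <;> simp [hvst]
    rw [hG, map_mul, map_prod]
    apply mul_ne_zero
    · apply Finset.prod_ne_zero_iff.2
      intro e he
      rw [map_sub, eval_z11, eval_z11, hZst, hZst]
      have hne' : e.1 ≠ e.2 := (Finset.mem_offDiag.1 he).2.2
      have : (e.1.1 : ℝ) ≠ (e.2.1 : ℝ) := by
        intro hc
        exact hne' (Fin.ext (Nat.cast_injective hc))
      intro hc
      apply this
      linarith
    · rw [map_prod]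
      apply Finset.prod_ne_zero_iff.2
      intro i _
      rw [MvPolynomial.eval_X]
      simp only [hvst, Sum.elim_inl]
      positivity
  obtain ⟨v₀, hv₀U, hv₀⟩ := exists_eval_ne_zero G _ hGne U hU hne
  rw [hG, map_mul, map_prod, map_prod] at hv₀
  have hv₀1 := mul_ne_zero_iff.1 hv₀
  have hdist : Function.Injective (Zv n L v₀) := by
    intro i j hij
    by_contra hc
    apply Finset.prod_ne_zero_iff.1 hv₀1.1 (i, j) (Finset.mem_offDiag.2
      ⟨Finset.mem_univ _, Finset.mem_univ _, hc⟩)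
    rw [map_sub, eval_z11, eval_z11, hij, sub_self]
  have hAnz : ∀ i ∈ A, v₀ (Sum.inl i) ≠ 0 := by
    intro i hi
    have := Finset.prod_ne_zero_iff.1 hv₀1.2 i hi
    rwa [MvPolynomial.eval_X] at this
  set z0 : Fin n → ℝ := Zv n L v₀ with hz0
  set κ₀ : ℝ := ∏ i ∈ A, v₀ (Sum.inl i) with hκ₀
  have hκ₀ne : κ₀ ≠ 0 := Finset.prod_ne_zero_iff.2 hAnz
  -- the curve
  obtain ⟨zc, hzcCont, hzc0, hzcEv⟩ := exists_pS_curve (by omega) z0 hdist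
  -- notation for members of L
  have hnotL : ∀ i : Fin n, i ≠ a → i ≠ b → i ∉ L := by
    intro i hia hib hc
    rcases (hLab i).1 hc with h | h
    · exact hia h
    · exact hib h
  have hz0x : ∀ i : Fin n, i ≠ a → i ≠ b → z0 i = v₀ (Sum.inl i) := by
    intro i hia hib
    simp only [hz0]
    unfold Zv
    rw [dif_neg (hnotL i hia hib), add_zero]
  have hEraseProp : ∀ j ∈ A.erase a, j ≠ a ∧ j ≠ b := by
    intro j hj
    refine ⟨(Finset.mem_erase.1 hj).1, ?_⟩
    intro hc
    exact hbNotA (hc ▸ (Finset.mem_erase.1 hj).2)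
  set Q : ℝ → ℝ := fun s => ∏ j ∈ A.erase a, zc s j with hQ
  have hQ0 : Q 0 = ∏ j ∈ A.erase a, v₀ (Sum.inl j) := by
    rw [hQ]
    simp only [hzc0]
    apply Finset.prod_congr rfl
    intro j hj
    exact hz0x j (hEraseProp j hj).1 (hEraseProp j hj).2
  have hQ0ne : Q 0 ≠ 0 := by
    rw [hQ0]
    apply Finset.prod_ne_zero_iff.2
    intro j hj
    exact hAnz j (Finset.mem_of_mem_erase hj)
  have hκfact : κ₀ = v₀ (Sum.inl a) * Q 0 := by
    rw [hκ₀, hQ0, ← Finset.mul_prod_erase A _ haMemA]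
  -- the deformed point
  set Xc : ℝ → Fin n → ℝ := fun s i =>
    if i = a then κ₀ / Q s
    else if i = b then v₀ (Sum.inl b) +
      (esymOn Finset.univ n (zc s) - esymOn Finset.univ n z0) / κ₀
    else zc s i with hXc
  set wv : ℝ → (Fin n ⊕ {i : Fin n // i ∈ L}) → ℝ :=
    fun s => Sum.elim (Xc s) (fun ℓ => zc s ℓ.1 - Xc s ℓ.1) with hwv
  have hXc0 : Xc 0 = fun i => v₀ (Sum.inl i) := by
    funext i
    simp only [hXc]
    by_cases hia : i = a
    · rw [if_pos hia, hκfact, mul_div_assoc, div_self hQ0ne, mul_one, hia]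
    · rw [if_neg hia]
      by_cases hib : i = b
      · rw [if_pos hib, hzc0, sub_self, zero_div, add_zero, hib]
      · rw [if_neg hib, hzc0, hz0x i hia hib]
  have hwv0 : wv 0 = v₀ := by
    funext c
    rcases c with i | ℓ
    · simp only [hwv, Sum.elim_inl, hXc0]
    · simp only [hwv, Sum.elim_inr, hXc0, hzc0]
      have : z0 ℓ.1 = v₀ (Sum.inl ℓ.1) + v₀ (Sum.inr ℓ) := by
        simp only [hz0]
        unfold Zv
        rw [dif_pos ℓ.2]
      rw [this]
      ring
  -- continuity of the whole family at 0
  have hzcj : ∀ j : Fin n, ContinuousAt (fun s => zc s j) 0 :=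
    fun j => (continuous_apply j).continuousAt.comp hzcCont
  have hQcont : ContinuousAt Q 0 :=
    tendsto_finset_prod _ (fun j _ => hzcj j)
  have hEcont : ContinuousAt (fun s => esymOn Finset.univ n (zc s)) 0 :=
    tendsto_finset_sum _ (fun t _ => tendsto_finset_prod _ (fun j _ => hzcj j))
  have hwvCont : ContinuousAt wv 0 := by
    apply continuousAt_pi.2
    intro c
    have hXcc : ∀ i : Fin n, ContinuousAt (fun s => Xc s i) 0 := by
      intro i
      simp only [hXc]
      by_cases hia : i = a
      · simp only [if_pos hia]
        exact ContinuousAt.div continuousAt_const hQcont hQ0ne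
      · simp only [if_neg hia]
        by_cases hib : i = b
        · simp only [if_pos hib]
          exact ContinuousAt.add continuousAt_const
            (ContinuousAt.div (ContinuousAt.sub hEcont continuousAt_const)
              continuousAt_const hκ₀ne)
        · simp only [if_neg hib]
          exact hzcj i
    rcases c with i | ℓ
    · exact hXcc i
    · exact ContinuousAt.sub (hzcj ℓ.1) (hXcc ℓ.1)
  have hwvU : ∀ᶠ s in nhds (0:ℝ), wv s ∈ U := by
    apply hwvCont.preimage_mem_nhds
    rw [hwv0]
    exact hU.mem_nhds hv₀U
  have hQne : ∀ᶠ s in nhds (0:ℝ), Q s ≠ 0 := hQcont.eventually_ne hQ0ne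
  -- choose a small nonzero s
  obtain ⟨s, hsprops, hs0⟩ : ∃ s : ℝ,
      (((∀ j, 1 ≤ j → j + 1 ≤ n → pS j (zc s) = pS j z0) ∧ pS n (zc s) = pS n z0 + s)
        ∧ wv s ∈ U ∧ Q s ≠ 0) ∧ s ≠ 0 := by
    have hall := (hzcEv.and (hwvU.and hQne))
    obtain ⟨ε, hε, hball⟩ := Metric.mem_nhds_iff.1 hall
    refine ⟨ε/2, hball ?_, by positivity⟩
    simp only [Metric.mem_ball, dist_zero_right, Real.norm_eq_abs]
    rw [abs_of_pos (by positivity)]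
    linarith
  obtain ⟨⟨hpSc, hpSn⟩, hwsU, hQsne⟩ := hsprops
  -- symmetric functions along the curve
  have hesym : ∀ m, 1 ≤ m → m ≤ n - 1 →
      esymOn Finset.univ m (zc s) = esymOn Finset.univ m z0 := by
    intro m _ hm
    apply esym_eq_of_pS_eq (zc s) z0 (n-1) _ m hm
    intro j hj1 hj2
    exact hpSc j hj1 (by omega)
  have hdelta : (n:ℝ) * (esymOn Finset.univ n (zc s) - esymOn Finset.univ n z0)
      = (-1)^(n+1) * s := by
    rw [esym_top_diff (by omega) (zc s) z0 (fun j hj1 hj2 => hpSc j hj1 (by omega)), hpSn]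
    ring
  set δ : ℝ := esymOn Finset.univ n (zc s) - esymOn Finset.univ n z0 with hδ
  have hδne : δ ≠ 0 := by
    intro hc
    rw [hc, mul_zero] at hdelta
    have h1 : ((-1:ℝ))^(n+1) ≠ 0 := pow_ne_zero _ (neg_ne_zero.2 one_ne_zero)
    rcases mul_eq_zero.1 hdelta.symm with h | h
    · exact h1 h
    · exact hs0 h
  -- Z values of the deformed point
  have hZw : Zv n L (wv s) = zc s := by
    funext ℓ
    unfold Zv
    by_cases hℓ : ℓ ∈ L
    · rw [dif_pos hℓ]
      simp only [hwv, Sum.elim_inl, Sum.elim_inr]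
      ring
    · rw [dif_neg hℓ]
      simp only [hwv, Sum.elim_inl, hXc]
      have hia : ℓ ≠ a := fun h => hℓ (h ▸ ha)
      have hib : ℓ ≠ b := fun h => hℓ (h ▸ hb)
      rw [if_neg hia, if_neg hib, add_zero]
  -- products
  have hQs : ∏ j ∈ A.erase a, Xc s j = Q s := by
    apply Finset.prod_congr rfl
    intro j hj
    simp only [hXc]
    rw [if_neg (hEraseProp j hj).1, if_neg (hEraseProp j hj).2]
  have hprodA : ∏ i ∈ A, Xc s i = κ₀ := by
    rw [← Finset.mul_prod_erase A _ haMemA, hQs]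
    simp only [hXc, if_pos rfl]
    field_simp
  have hfilterNeg : Finset.univ.filter (fun i : Fin n => ¬ i.1 < n - 1) = {b} := by
    ext i
    simp only [Finset.mem_filter, Finset.mem_univ, true_and, Finset.mem_singleton]
    constructor
    · intro h
      apply Fin.ext
      have := i.2
      omega
    · intro h
      rw [h, hbA]
      omega
  have hunivprod : ∀ f : Fin n → ℝ, ∏ i, f i = (∏ i ∈ A, f i) * f b := by
    intro f
    rw [← Finset.prod_filter_mul_prod_filter_not Finset.univ (fun i : Fin n => i.1 < n - 1) f,
      hfilterNeg, Finset.prod_singleton, hA]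
  -- the coordinates agree
  have heq : ∀ m, MvPolynomial.eval (wv s) (coeffs11 n n L m)
      = MvPolynomial.eval v₀ (coeffs11 n n L m) := by
    apply eval_coeffs_eq
    · intro m hm1 hm2
      rw [hZw, ← hz0]
      exact hesym m hm1 hm2
    · rw [hZw, ← hz0]
      have hwinl : ∀ i, wv s (Sum.inl i) = Xc s i := fun _ => rfl
      simp only [hwinl]
      rw [hunivprod (Xc s), hunivprod (fun i => v₀ (Sum.inl i)), hprodA, ← hκ₀]
      simp only [hXc, if_neg (Ne.symm hab), if_pos rfl, if_true]
      field_simp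
      ring
    · have hwinl : ∀ i, wv s (Sum.inl i) = Xc s i := fun _ => rfl
      simp only [hwinl]
      rw [show Finset.univ.filter (fun i : Fin n => i.1 < n - 1) = A from rfl] at *
      rw [hprodA, hκ₀]
    · intro j
      have hT : Finset.univ.filter (fun i : Fin n => n ≤ i.1) = ∅ := by
        ext i
        simp only [Finset.mem_filter, Finset.mem_univ, true_and, Finset.notMem_empty,
          iff_false]
        have := i.2
        omega
      rw [hT]
      exact esymOn_empty_congr j _ _
  -- contradiction
  have hfin := hinj hwsU hv₀U (funext heq)
  have hc := congrFun hfin (Sum.inl b)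
  simp only [hwv, Sum.elim_inl, hXc, if_neg hab.symm, eq_self_iff_true, if_true] at hc
  rw [← hδ] at hc
  have : δ / κ₀ = 0 := by linarith
  rw [div_eq_zero_iff] at this
  rcases this with h | h
  · exact hδne h
  · exact hκ₀ne h

/-- If the cycle model has at least `n - p + 2` leaks, then the (real-evaluated) coefficient
map is not injective on any nonempty open subset of the parameter space `ℝ^{n + |L|}`. -/
theorem stmt11 (n p : ℕ) (hn : 3 ≤ n) (hp1 : 1 ≤ p) (hpn : p ≤ n)
    (L : Finset (Fin n)) (hL : n - p + 2 ≤ L.card) :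
    ∀ U : Set ((Fin n ⊕ {i : Fin n // i ∈ L}) → ℝ), IsOpen U → U.Nonempty →
      ¬ Set.InjOn
        (fun (v : (Fin n ⊕ {i : Fin n // i ∈ L}) → ℝ) (m : Fin (2 * n - p + 1)) =>
          MvPolynomial.eval v (coeffs11 n p L m)) U := by
  intro U hU hne
  by_cases hpair : ∃ ℓ₁ ℓ₂ : Fin n, ℓ₁ ∈ L ∧ ℓ₂ ∈ L ∧ ℓ₁ ≠ ℓ₂ ∧ (ℓ₁.1 < p - 1 ↔ ℓ₂.1 < p - 1)
  · obtain ⟨ℓ₁, ℓ₂, h₁, h₂, hne12, hiff⟩ := hpair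
    exact caseSame n p L ℓ₁ ℓ₂ h₁ h₂ hne12 hiff U hU hne
  · push_neg at hpair
    classical
    set LA := L.filter (fun i : Fin n => i.1 < p - 1) with hLA
    set LB := L.filter (fun i : Fin n => ¬ i.1 < p - 1) with hLB
    have hLAcard : LA.card ≤ 1 := by
      by_contra h
      push_neg at h
      obtain ⟨x, hx, y, hy, hxy⟩ := Finset.one_lt_card.1 h
      have hd := hpair x y (Finset.mem_filter.1 hx).1 (Finset.mem_filter.1 hy).1 hxy
      have hx2 := (Finset.mem_filter.1 hx).2
      have hy2 := (Finset.mem_filter.1 hy).2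
      rcases hd with ⟨h1, h2⟩ | ⟨h1, h2⟩ <;> omega
    have hLBcard : LB.card ≤ 1 := by
      by_contra h
      push_neg at h
      obtain ⟨x, hx, y, hy, hxy⟩ := Finset.one_lt_card.1 h
      have hd := hpair x y (Finset.mem_filter.1 hx).1 (Finset.mem_filter.1 hy).1 hxy
      have hx2 := (Finset.mem_filter.1 hx).2
      have hy2 := (Finset.mem_filter.1 hy).2
      rcases hd with ⟨h1, h2⟩ | ⟨h1, h2⟩ <;> omega
    have hsum : LA.card + LB.card = L.card :=
      Finset.card_filter_add_card_filter_not _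
    have hp_n : p = n := by omega
    subst hp_n
    have hLA1 : LA.card = 1 := by omega
    have hLB1 : LB.card = 1 := by omega
    obtain ⟨a, hLAa⟩ := Finset.card_eq_one.1 hLA1
    obtain ⟨b, hLBb⟩ := Finset.card_eq_one.1 hLB1
    have haLA : a ∈ LA := hLAa ▸ Finset.mem_singleton_self a
    have hbLB : b ∈ LB := hLBb ▸ Finset.mem_singleton_self b
    have ha : a ∈ L := (Finset.mem_filter.1 haLA).1
    have hb : b ∈ L := (Finset.mem_filter.1 hbLB).1
    have haA : a.1 < p - 1 := (Finset.mem_filter.1 haLA).2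
    have hbA' : ¬ b.1 < p - 1 := (Finset.mem_filter.1 hbLB).2
    have hbA : b.1 = p - 1 := by
      have := b.2
      omega
    have hLab : ∀ i, i ∈ L ↔ (i = a ∨ i = b) := by
      intro i
      constructor
      · intro hi
        by_cases hcl : i.1 < p - 1
        · left
          have : i ∈ LA := Finset.mem_filter.2 ⟨hi, hcl⟩
          rwa [hLAa, Finset.mem_singleton] at this
        · right
          have : i ∈ LB := Finset.mem_filter.2 ⟨hi, hcl⟩
          rwa [hLBb, Finset.mem_singleton] at this
      · intro hi
        rcases hi with h | h
        · exact h ▸ ha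
        · exact h ▸ hb
    exact caseHard p hn L a b ha hb haA hbA hLab U hU hne
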